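/- Let A be a type, B a linear order, n a natural number, F : A → (Fin n → B), s a nonempty finite set of elements of A, and i : Fin n. Then there exists a ∈ s such that: (i) a is Pareto optimal for F on s, i.e. there is no a' ∈ s with F a' ≺ F a; and (ii) a minimizes the i-th objective, i.e. F a i ≤ F a' i for every a' ∈ s. In other words, the minimum of each component objective is attained at some Pareto optimal element. -/

import Mathlib

/-- Dominance relation on `Fin n → B` for a linear order `B`. -/
def dominates {B : Type*} [LinearOrder B] {n : ℕ} (x y : Fin n → B) : Prop :=
  (∀ i, x i ≤ y i) ∧ (∃ i, x i < y i)

lemma dominates_iff_lt {B : Type*} [LinearOrder B] {n : ℕ} (x y : Fin n → B) :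
    dominates x y ↔ x < y := by
  constructor
  · rintro ⟨hle, j, hj⟩
    exact lt_of_le_of_ne (fun k => hle k) (fun h => absurd (congrFun h j) hj.ne)
  · intro h
    refine ⟨fun k => h.le k, ?_⟩
    by_contra hc
    push_neg at hc
    exact h.ne (le_antisymm h.le (fun k => hc k))

theorem stmt_8 {A B : Type*} [LinearOrder B] {n : ℕ} (F : A → (Fin n → B))
    (s : Finset A) (hs : s.Nonempty) (i : Fin n) :
    ∃ a ∈ s, (¬ ∃ a' ∈ s, dominates (F a') (F a)) ∧ (∀ a' ∈ s, F a i ≤ F a' i) := by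
  classical
  set t := s.filter (fun a => ∀ a' ∈ s, F a i ≤ F a' i) with ht
  have htne : t.Nonempty := by
    obtain ⟨b, hb, hbmin⟩ := s.exists_min_image (fun a => F a i) hs
    exact ⟨b, Finset.mem_filter.2 ⟨hb, hbmin⟩⟩
  obtain ⟨m, hm, hmmin⟩ := (t.image F).exists_minimal (htne.image F)
  obtain ⟨a, hat, hFa⟩ := Finset.mem_image.1 hm
  have has : a ∈ s := (Finset.mem_filter.1 hat).1
  have hamin : ∀ a' ∈ s, F a i ≤ F a' i := (Finset.mem_filter.1 hat).2
  refine ⟨a, has, ?_, hamin⟩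
  rintro ⟨a', ha's, hd⟩
  rw [dominates_iff_lt] at hd
  have ha't : a' ∈ t := by
    refine Finset.mem_filter.2 ⟨ha's, fun b hb => ?_⟩
    calc F a' i ≤ F a i := hd.le i
    _ ≤ F b i := hamin b hb
  subst hFa
  exact absurd (hmmin (Finset.mem_image_of_mem F ha't) hd.le) hd.not_ge
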